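/- Let G be a graph of order n = 4k + 1 whose Seidel matrix S is singular with a nullspace vector φ ∈ {±1}^n. Then the number of edges of G satisfies 3k ≤ |E(G)| ≤ 8k² - k. -/
import Mathlib

open Matrix Finset

def seidelMatrix {n : ℕ} (G : SimpleGraph (Fin n)) [DecidableRel G.Adj] :
    Matrix (Fin n) (Fin n) ℤ :=
  Matrix.of fun i j => if i = j then 0 else if G.Adj i j then -1 else 1

section aux
variable {n : ℕ} (G : SimpleGraph (Fin n)) [DecidableRel G.Adj]

lemma nbr_filter (i : Fin n) : G.neighborFinset i = Finset.univ.filter (G.Adj i) := by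
  ext j; simp

lemma swap_sum (f : Fin n → Fin n → ℤ) :
    ∑ i, ∑ j ∈ G.neighborFinset i, f i j = ∑ i, ∑ j ∈ G.neighborFinset i, f j i := by
  simp only [nbr_filter, Finset.sum_filter]
  rw [Finset.sum_comm]
  refine Finset.sum_congr rfl fun i _ => Finset.sum_congr rfl fun j _ => ?_
  exact if_congr (G.adj_comm j i) rfl rfl

lemma key_eq (φ : Fin n → ℤ) (h0 : (seidelMatrix G).mulVec φ = 0) (i : Fin n) :
    2 * ∑ j ∈ G.neighborFinset i, φ j = (∑ j, φ j) - φ i := by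
  have h := congrFun h0 i
  simp only [mulVec, dotProduct, Pi.zero_apply] at h
  have : ∀ j, seidelMatrix G i j * φ j
      = (if i = j then 0 else φ j) - 2 * (if G.Adj i j then φ j else 0) := by
    intro j
    by_cases hij : i = j
    · subst hij; simp [seidelMatrix]
    · by_cases ha : G.Adj i j <;> simp [seidelMatrix, hij, ha] <;> ring
  rw [Finset.sum_congr rfl fun j _ => this j] at h
  rw [Finset.sum_sub_distrib, ← Finset.mul_sum] at h
  have e1 : ∑ j, (if i = j then 0 else φ j) = (∑ j, φ j) - φ i := by
    have : (∑ j, φ j) = ∑ j, ((if i = j then φ j else 0) + (if i = j then 0 else φ j)) := by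
      refine Finset.sum_congr rfl fun j _ => ?_
      by_cases hij : i = j <;> simp [hij]
    rw [this, Finset.sum_add_distrib, Finset.sum_ite_eq]
    simp
  have e2 : ∑ j, (if G.Adj i j then φ j else 0) = ∑ j ∈ G.neighborFinset i, φ j := by
    rw [nbr_filter, Finset.sum_filter]
  rw [e1, e2] at h
  linarith

lemma lower_pos {k : ℕ} (hn : n = 4 * k + 1) (φ : Fin n → ℤ)
    (h1 : ∀ i, φ i = 1 ∨ φ i = -1) (h0 : (seidelMatrix G).mulVec φ = 0)
    (hT : 1 ≤ ∑ j, φ j) : 3 * k ≤ G.edgeFinset.card := by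
  set T := ∑ j, φ j with hTdef
  set N : Fin n → ℤ := fun i => ∑ j ∈ G.neighborFinset i, φ j with hN
  have key : ∀ i, 2 * N i = T - φ i := key_eq G φ h0
  have habs : ∀ i, |N i| ≤ (G.degree i : ℤ) := by
    intro i
    calc |N i| ≤ ∑ j ∈ G.neighborFinset i, |φ j| := Finset.abs_sum_le_sum_abs _ _
    _ = (G.degree i : ℤ) := by
        rw [Finset.sum_congr rfl fun j _ =>
          show |φ j| = 1 by rcases h1 j with h | h <;> simp [h]]
        rw [Finset.sum_const, SimpleGraph.degree, nsmul_eq_mul, mul_one]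
  have hQ : ∑ i, (G.degree i : ℤ) = 2 * G.edgeFinset.card := by
    rw [← Nat.cast_sum]
    exact_mod_cast congrArg (Nat.cast : ℕ → ℤ) G.sum_degrees_eq_twice_card_edges
  have hsumN : 2 * ∑ i, N i = T * (n - 1) := by
    rw [Finset.mul_sum, Finset.sum_congr rfl fun i _ => key i, Finset.sum_sub_distrib]
    simp [mul_comm]
    ring
  -- T odd
  have hi0 : (0 : ℕ) < n := by omega
  have hTodd : Odd T := by
    have hk := key ⟨0, hi0⟩
    rcases h1 ⟨0, hi0⟩ with h | h
    · exact ⟨N ⟨0, hi0⟩, by rw [h] at hk; linarith⟩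
    · exact ⟨N ⟨0, hi0⟩ - 1, by rw [h] at hk; linarith⟩
  have goal2 : (6 * k : ℤ) ≤ ∑ i, (G.degree i : ℤ) → 3 * k ≤ G.edgeFinset.card := by
    intro h
    rw [hQ] at h
    exact_mod_cast by linarith
  apply goal2
  rcases eq_or_lt_of_le hT with hT1 | hT3
  · -- T = 1 case
    have hT1 : T = 1 := hT1.symm
    have hsymm : ∑ i, φ i * (G.degree i : ℤ) = ∑ i, N i := by
      have : ∀ i, φ i * (G.degree i : ℤ) = ∑ j ∈ G.neighborFinset i, φ i := by
        intro i
        rw [Finset.sum_const, SimpleGraph.degree, nsmul_eq_mul, mul_comm]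
      rw [Finset.sum_congr rfl fun i _ => this i, swap_sum]
    have hφN : 2 * ∑ i, φ i * N i = T - n := by
      have : ∀ i, 2 * (φ i * N i) = φ i * T - 1 := by
        intro i
        have := key i
        have hsq : φ i * φ i = 1 := by rcases h1 i with h | h <;> simp [h]
        calc 2 * (φ i * N i) = φ i * (2 * N i) := by ring
        _ = φ i * T - φ i * φ i := by rw [this]; ring
        _ = φ i * T - 1 := by rw [hsq]
      rw [Finset.mul_sum, Finset.sum_congr rfl fun i _ => this i, Finset.sum_sub_distrib,
        ← Finset.sum_mul]
      simp [← hTdef, hT1]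
    -- per-vertex: (1 - φ i) * (degree i + N i - 2) ≥ 0
    have hpv : ∀ i, 0 ≤ (1 - φ i) * ((G.degree i : ℤ) + N i - 2) := by
      intro i
      rcases h1 i with h | h
      · simp [h]
      · have h2 : 2 * N i = 2 := by rw [key i, hT1, h]; ring
        have hNi : N i = 1 := by omega
        have hd : (1 : ℤ) ≤ (G.degree i : ℤ) := by
          have := (le_abs_self (N i)).trans (habs i); rw [hNi] at this; exact this
        rw [h, hNi]
        nlinarith
    have hsum : 0 ≤ ∑ i, (1 - φ i) * ((G.degree i : ℤ) + N i - 2) :=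
      Finset.sum_nonneg fun i _ => hpv i
    have hexp : ∑ i, (1 - φ i) * ((G.degree i : ℤ) + N i - 2)
        = ∑ i, (G.degree i : ℤ) + ∑ i, N i - 2 * n
          - (∑ i, φ i * (G.degree i : ℤ)) - ∑ i, φ i * N i + 2 * T := by
      rw [Finset.sum_congr rfl fun i _ =>
        (by ring : (1 - φ i) * ((G.degree i : ℤ) + N i - 2)
          = ((G.degree i : ℤ) + N i - 2) - (φ i * (G.degree i : ℤ) + φ i * N i - 2 * φ i))]
      rw [Finset.sum_sub_distrib]
      simp only [Finset.sum_add_distrib, Finset.sum_sub_distrib, Finset.sum_const,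
        Finset.card_univ, Fintype.card_fin, nsmul_eq_mul, ← Finset.mul_sum, ← hTdef]
      ring
    rw [hexp, hsymm] at hsum
    have h4k : 2 * ∑ i, N i = 4 * k := by rw [hsumN, hT1, hn]; push_cast; ring
    have hn' : (n : ℤ) = 4 * k + 1 := by exact_mod_cast hn
    rw [hT1, hn'] at hφN
    linarith
  · -- T ≥ 3 case
    have hT3 : 3 ≤ T := by
      rcases hTodd with ⟨m, hm⟩; omega
    have : ∀ i, T - φ i ≤ 2 * (G.degree i : ℤ) := by
      intro i
      have h1' := habs i
      have := key i
      have : |2 * N i| ≤ 2 * (G.degree i : ℤ) := by rw [abs_mul]; simpa using h1'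
      rw [key i] at this
      have := (abs_le.mp this).2
      linarith
    have hsum := Finset.sum_le_sum fun i (_ : i ∈ Finset.univ) => this i
    rw [Finset.sum_sub_distrib, ← Finset.mul_sum, ← hTdef] at hsum
    simp only [Finset.sum_const, Finset.card_univ, Fintype.card_fin, nsmul_eq_mul] at hsum
    have hn' : (n : ℤ) = 4 * k + 1 := by exact_mod_cast hn
    nlinarith [hsum]

lemma lower {k : ℕ} (hn : n = 4 * k + 1) (φ : Fin n → ℤ)
    (h1 : ∀ i, φ i = 1 ∨ φ i = -1) (h0 : (seidelMatrix G).mulVec φ = 0) :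
    3 * k ≤ G.edgeFinset.card := by
  have hi0 : (0 : ℕ) < n := by omega
  have hTodd : Odd (∑ j, φ j) := by
    have hk := key_eq G φ h0 ⟨0, hi0⟩
    rcases h1 ⟨0, hi0⟩ with h | h
    · exact ⟨∑ j ∈ G.neighborFinset ⟨0, hi0⟩, φ j, by rw [h] at hk; linarith⟩
    · exact ⟨(∑ j ∈ G.neighborFinset ⟨0, hi0⟩, φ j) - 1, by rw [h] at hk; linarith⟩
  rcases le_or_gt 1 (∑ j, φ j) with hT | hT
  · exact lower_pos G hn φ h1 h0 hT
  · have hT' : 1 ≤ ∑ j, (-φ) j := by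
      obtain ⟨m, hm⟩ := hTodd
      have hneg : ∑ j, (-φ) j = -∑ j, φ j := by simp
      omega
    exact lower_pos G hn (-φ)
      (fun i => (h1 i).symm.imp (fun h => by simp [Pi.neg_apply, h])
        (fun h => by simp [Pi.neg_apply, h]))
      (by rw [mulVec_neg, h0, neg_zero]) hT'

end aux

theorem edge_count_bounds {n k : ℕ} (hn : n = 4 * k + 1)
    (G : SimpleGraph (Fin n)) [DecidableRel G.Adj]
    (hsing : (seidelMatrix G).det = 0)
    (hφ : ∃ φ : Fin n → ℤ, (∀ i, φ i = 1 ∨ φ i = -1) ∧ (seidelMatrix G).mulVec φ = 0) :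
    3 * k ≤ G.edgeFinset.card ∧ G.edgeFinset.card ≤ 8 * k ^ 2 - k := by
  obtain ⟨φ, h1, h0⟩ := hφ
  refine ⟨lower G hn φ h1 h0, ?_⟩
  -- complement
  have hScompl : seidelMatrix Gᶜ = -seidelMatrix G := by
    ext i j
    by_cases hij : i = j
    · simp [seidelMatrix, hij]
    · by_cases ha : G.Adj i j <;> simp [seidelMatrix, hij, ha, SimpleGraph.compl_adj]
  have h0' : (seidelMatrix Gᶜ).mulVec φ = 0 := by
    rw [hScompl, neg_mulVec, h0, neg_zero]
  have hcompl : 3 * k ≤ Gᶜ.edgeFinset.card := lower Gᶜ hn φ h1 h0'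
  have hdeg : ∀ v, Gᶜ.degree v + G.degree v = n - 1 := by
    intro v
    rw [G.degree_compl v]
    have := G.degree_lt_card_verts v
    simp only [Fintype.card_fin] at *
    omega
  have hsum : 2 * Gᶜ.edgeFinset.card + 2 * G.edgeFinset.card = n * (n - 1) := by
    rw [← SimpleGraph.sum_degrees_eq_twice_card_edges, ← SimpleGraph.sum_degrees_eq_twice_card_edges,
      ← Finset.sum_add_distrib, Finset.sum_congr rfl fun v _ => hdeg v]
    simp [mul_comm]
  subst hn
  have h1' : 4 * k + 1 - 1 = 4 * k := by omega
  rw [h1'] at hsum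
  have hK : (4 * k + 1) * (4 * k) = 16 * (k * k) + 4 * k := by ring
  rw [hK] at hsum
  have hsq : 8 * k ^ 2 - k = 8 * (k * k) - k := by rw [pow_two]
  rw [hsq]
  generalize k * k = K at hsum ⊢
  omega
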